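/- Egalitarian ratio of leximin, lower bound: for n ≥ 1 and α ∈ (0,1), in any cake-sharing instance with n agents with piecewise uniform utilities, every leximin allocation A satisfies min_i ℓ(A∩W_i)/ℓ(W_i) ≥ α/(n − (n−1)α). -/

import Mathlib

open MeasureTheory

/-- The non-decreasing rearrangement of a vector. -/
noncomputable def sortVec {n : ℕ} (x : Fin n → ℝ) : Fin n → ℝ := x ∘ Tuple.sort x

/-- Leximin (weak) order: compare sorted vectors lexicographically. -/
noncomputable def leximinLE {n : ℕ} (x y : Fin n → ℝ) : Prop :=
  toLex (sortVec x) ≤ toLex (sortVec y)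

noncomputable def finWF (n : ℕ) : WellFoundedLT (Fin n) := inferInstance

lemma toLex_le_toLex {n : ℕ} {a b : Fin n → ℝ} (h : ∀ k, a k ≤ b k) :
    toLex a ≤ toLex b :=
  @Pi.toLex_monotone (Fin n) (fun _ => ℝ) _ _ (finWF n) a b h

lemma sortVec_mono {n : ℕ} (x : Fin n → ℝ) : Monotone (sortVec x) :=
  Tuple.monotone_sort x

lemma sortVec_le_sortVec {n : ℕ} {u v : Fin n → ℝ} (h : ∀ j, u j ≤ v j) :
    ∀ k, sortVec u k ≤ sortVec v k := by
  intro k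
  set σ := Tuple.sort u with hσ
  set τ := Tuple.sort v with hτ
  have hinter : ((Finset.Ici k).image σ ∩ (Finset.Iic k).image τ).Nonempty := by
    by_contra hc
    rw [Finset.not_nonempty_iff_eq_empty, ← Finset.disjoint_iff_inter_eq_empty] at hc
    have hcard := Finset.card_union_of_disjoint hc
    have h1 : ((Finset.Ici k).image σ).card = (Finset.Ici k).card :=
      Finset.card_image_of_injective _ σ.injective
    have h2 : ((Finset.Iic k).image τ).card = (Finset.Iic k).card :=
      Finset.card_image_of_injective _ τ.injective
    have hle : ((Finset.Ici k).image σ ∪ (Finset.Iic k).image τ).card ≤ n := by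
      have := Finset.card_le_univ ((Finset.Ici k).image σ ∪ (Finset.Iic k).image τ)
      simpa using this
    rw [hcard, h1, h2] at hle
    rw [Fin.card_Ici, Fin.card_Iic] at hle
    omega
  obtain ⟨m, hm⟩ := hinter
  rw [Finset.mem_inter] at hm
  obtain ⟨hm1, hm2⟩ := hm
  obtain ⟨a, ha, hma⟩ := Finset.mem_image.1 hm1
  obtain ⟨b, hb, hmb⟩ := Finset.mem_image.1 hm2
  have h3 : sortVec u k ≤ u m := by
    rw [← hma]; exact Tuple.monotone_sort u (Finset.mem_Ici.1 ha)
  have h4 : v m ≤ sortVec v k := by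
    rw [← hmb]; exact Tuple.monotone_sort v (Finset.mem_Iic.1 hb)
  exact h3.trans ((h m).trans h4)

lemma sortVec_min {n : ℕ} (x : Fin n → ℝ) (s : ℝ) :
    sortVec (fun j => min (x j) s) = fun k => min (sortVec x k) s := by
  have h1 : Monotone ((fun j => min (x j) s) ∘ Tuple.sort x) := by
    intro a b hab
    exact min_le_min (Tuple.monotone_sort x hab) le_rfl
  have := Tuple.unique_monotone (f := fun j => min (x j) s)
    (σ := Tuple.sort (fun j => min (x j) s)) (τ := Tuple.sort x)
    (Tuple.monotone_sort _) h1
  ext k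
  exact congrFun this k

lemma sortVec_sum {n : ℕ} (x : Fin n → ℝ) : ∑ k, sortVec x k = ∑ k, x k :=
  Equiv.sum_comp (Tuple.sort x) x

lemma not_leximinLE_of_cap {n : ℕ} {u v : Fin n → ℝ} {s : ℝ}
    (h : ∀ j, min (u j) s ≤ min (v j) s) {i : Fin n}
    (hi : min (u i) s < min (v i) s) : ¬ leximinLE v u := by
  set cu := fun j => min (u j) s with hcu
  set cv := fun j => min (v j) s with hcv
  have h1 : ∀ k, sortVec cu k ≤ sortVec cv k := sortVec_le_sortVec h
  have hsum : ∑ k, sortVec cu k < ∑ k, sortVec cv k := by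
    rw [sortVec_sum, sortVec_sum]
    exact Finset.sum_lt_sum (fun j _ => h j) ⟨i, Finset.mem_univ i, hi⟩
  have hne : sortVec cu ≠ sortVec cv := by
    intro e; rw [e] at hsum; exact lt_irrefl _ hsum
  have hlt : toLex (sortVec cu) < toLex (sortVec cv) :=
    lt_of_le_of_ne (toLex_le_toLex (fun k => h1 k)) (fun e => hne (toLex.injective e))
  rw [hcu, hcv, sortVec_min, sortVec_min] at hlt
  obtain ⟨k, hk1, hk2⟩ := hlt
  simp only [Pi.toLex_apply] at hk1 hk2
  have hsuk : sortVec u k < s := by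
    by_contra hc
    push_neg at hc
    rw [min_eq_right hc] at hk2
    exact absurd (min_le_right _ _) (not_le_of_gt hk2)
  have hklt : sortVec u k < sortVec v k := by
    rw [min_eq_left hsuk.le] at hk2
    exact lt_of_lt_of_le hk2 (min_le_left _ _)
  intro hle
  have hlt2 : toLex (sortVec u) < toLex (sortVec v) := by
    refine ⟨k, fun j hj => ?_, hklt⟩
    have hj1 := hk1 j hj
    have hsuj : sortVec u j < s := lt_of_le_of_lt (sortVec_mono u hj.le) hsuk
    rw [min_eq_left hsuj.le] at hj1
    have hsvj : sortVec v j < s := by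
      by_contra hc
      push_neg at hc
      rw [min_eq_right hc] at hj1
      exact absurd hj1.ge (not_le_of_gt hsuj)
    rw [min_eq_left hsvj.le] at hj1
    exact hj1
  exact absurd hle (not_le_of_gt hlt2)

lemma subfin {s : Set ℝ} (hs : s ⊆ Set.Icc 0 1) : volume s ≠ ⊤ := by
  have h1 : volume s ≤ volume (Set.Icc (0:ℝ) 1) := measure_mono hs
  rw [Real.volume_Icc] at h1
  exact ne_top_of_le_ne_top (by simp) h1

lemma exists_subset_toReal {s : Set ℝ} (hs : s ⊆ Set.Icc 0 1) (hms : MeasurableSet s)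
    {r : ℝ} (hr0 : 0 ≤ r) (hr : r ≤ (volume s).toReal) :
    ∃ E, E ⊆ s ∧ MeasurableSet E ∧ volume E = ENNReal.ofReal r := by
  set f : ℝ → ℝ := fun t => (volume (s ∩ Set.Iic t)).toReal with hf
  have hfin : ∀ t, volume (s ∩ Set.Iic t) ≠ ⊤ :=
    fun t => subfin (Set.inter_subset_left.trans hs)
  have key : ∀ a b : ℝ, b ≤ a → f b ≤ f a ∧ f a - f b ≤ a - b := by
    intro a b hba
    constructor
    · exact ENNReal.toReal_mono (hfin a)
        (measure_mono (Set.inter_subset_inter_right _ (Set.Iic_subset_Iic.2 hba)))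
    · have hsub : s ∩ Set.Iic a ⊆ (s ∩ Set.Iic b) ∪ Set.Ioc b a := by
        intro x hx
        by_cases hxb : x ≤ b
        · exact Or.inl ⟨hx.1, hxb⟩
        · exact Or.inr ⟨not_le.1 hxb, hx.2⟩
      have h1 : volume (s ∩ Set.Iic a) ≤ volume (s ∩ Set.Iic b) + volume (Set.Ioc b a) :=
        le_trans (measure_mono hsub) (measure_union_le _ _)
      have h2 := ENNReal.toReal_mono (by
        rw [Real.volume_Ioc]
        exact ENNReal.add_ne_top.2 ⟨hfin b, ENNReal.ofReal_ne_top⟩) h1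
      rw [ENNReal.toReal_add (hfin b) (by rw [Real.volume_Ioc]; exact ENNReal.ofReal_ne_top),
        Real.volume_Ioc, ENNReal.toReal_ofReal (by linarith)] at h2
      simp only [hf] at *
      linarith
  have hcont : Continuous f := by
    refine (LipschitzWith.of_dist_le_mul (K := 1) ?_).continuous
    intro a b
    rcases le_total b a with h | h
    · obtain ⟨h1, h2⟩ := key a b h
      rw [Real.dist_eq, Real.dist_eq, NNReal.coe_one, one_mul, abs_of_nonneg (by linarith),
        abs_of_nonneg (by linarith)]
      linarith
    · obtain ⟨h1, h2⟩ := key b a h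
      rw [Real.dist_eq, Real.dist_eq, NNReal.coe_one, one_mul, abs_of_nonpos (by linarith),
        abs_of_nonpos (by linarith)]
      linarith
  have hf0 : f 0 = 0 := by
    have hss : s ∩ Set.Iic 0 ⊆ {0} := by
      intro x hx
      have := hs hx.1
      simp only [Set.mem_singleton_iff]
      exact le_antisymm hx.2 this.1
    have h0 : volume (s ∩ Set.Iic 0) = 0 :=
      measure_mono_null hss (measure_singleton 0)
    simp [hf, h0]
  have hf1 : f 1 = (volume s).toReal := by
    have hss : s ∩ Set.Iic 1 = s := by
      apply Set.inter_eq_self_of_subset_left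
      intro x hx
      exact (hs hx).2
    rw [hf]; simp only [hss]
  have hmem : r ∈ Set.Icc (f 0) (f 1) := by
    rw [hf0, hf1]; exact ⟨hr0, hr⟩
  obtain ⟨t, _, hft⟩ := intermediate_value_Icc (by norm_num : (0:ℝ) ≤ 1) hcont.continuousOn hmem
  refine ⟨s ∩ Set.Iic t, Set.inter_subset_left, hms.inter measurableSet_Iic, ?_⟩
  rw [← hft]
  simp only [hf]
  rw [ENNReal.ofReal_toReal (hfin t)]
/-- Egalitarian ratio of the leximin solution, lower bound: every leximin allocation `A`
satisfies `ℓ(A ∩ W i) / ℓ(W i) ≥ α / (n − (n−1)α)` for every agent `i`. -/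
theorem leximin_egalitarian_ratio_lower_bound {n : ℕ} (hn : 1 ≤ n)
    (α : ℝ) (hα : α ∈ Set.Ioo (0 : ℝ) 1)
    (W : Fin n → Set ℝ) (hWsub : ∀ i, W i ⊆ Set.Icc 0 1)
    (hWmeas : ∀ i, MeasurableSet (W i))
    (hWpos : ∀ i, 0 < (volume (W i)).toReal)
    (A : Set ℝ) (hAsub : A ⊆ Set.Icc 0 1) (hAmeas : MeasurableSet A)
    (hAlen : (volume A).toReal ≤ α)
    (hlex : ∀ B : Set ℝ, B ⊆ Set.Icc 0 1 → MeasurableSet B → (volume B).toReal ≤ α →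
      leximinLE (fun i => (volume (B ∩ W i)).toReal) (fun i => (volume (A ∩ W i)).toReal)) :
    ∀ i, α / (n - (n - 1) * α) ≤ (volume (A ∩ W i)).toReal / (volume (W i)).toReal := by
  classical
  obtain ⟨hα0, hα1⟩ := hα
  have hn1 : (1:ℝ) ≤ (n:ℝ) := by exact_mod_cast hn
  set u : Fin n → ℝ := fun j => (volume (A ∩ W j)).toReal with hu
  set w : Fin n → ℝ := fun j => (volume (W j)).toReal with hwdef
  have hfinW : ∀ j, volume (W j) ≠ ⊤ := fun j => subfin (hWsub j)
  have hfinA : volume A ≠ ⊤ := subfin hAsub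
  have hfinAW : ∀ j, volume (A ∩ W j) ≠ ⊤ :=
    fun j => subfin (Set.inter_subset_left.trans hAsub)
  have hu_le_w : ∀ j, u j ≤ w j :=
    fun j => ENNReal.toReal_mono (hfinW j) (measure_mono Set.inter_subset_right)
  have hu0 : ∀ j, 0 ≤ u j := fun j => ENNReal.toReal_nonneg
  have hWdiffA : ∀ i, (volume (W i \ A)).toReal = w i - u i := by
    intro i
    have hkey : volume (W i ∩ A) + volume (W i \ A) = volume (W i) :=
      measure_inter_add_diff _ hAmeas
    have hfin1 : volume (W i ∩ A) ≠ ⊤ := subfin (Set.inter_subset_left.trans (hWsub i))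
    have hfin2 : volume (W i \ A) ≠ ⊤ := subfin (Set.diff_subset.trans (hWsub i))
    have h1 := congrArg ENNReal.toReal hkey
    rw [ENNReal.toReal_add hfin1 hfin2, Set.inter_comm] at h1
    have : (volume (A ∩ W i)).toReal = u i := rfl
    rw [this] at h1
    have h2 : (volume (W i)).toReal = w i := rfl
    rw [h2] at h1
    linarith
  -- if there is slack and agent i is not satiated, contradiction
  have no_slack : ∀ i, (volume A).toReal < α → u i < w i → False := by
    intro i hAlt hui
    set δ := min (α - (volume A).toReal) (w i - u i) with hδ
    have hδpos : 0 < δ := lt_min (by linarith) (by linarith)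
    obtain ⟨E, hEsub, hEmeas, hEvol⟩ :=
      exists_subset_toReal (Set.diff_subset.trans (hWsub i)) ((hWmeas i).diff hAmeas)
        hδpos.le (by rw [hWdiffA i]; exact min_le_right _ _)
    have hEfin : volume E ≠ ⊤ := by rw [hEvol]; exact ENNReal.ofReal_ne_top
    have hEtoReal : (volume E).toReal = δ := by rw [hEvol, ENNReal.toReal_ofReal hδpos.le]
    have hEdisjA : Disjoint A E := Set.disjoint_right.2 (fun x hx => (hEsub hx).2)
    set B := A ∪ E with hB
    have hBsub : B ⊆ Set.Icc 0 1 :=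
      Set.union_subset hAsub (hEsub.trans (Set.diff_subset.trans (hWsub i)))
    have hBmeas : MeasurableSet B := hAmeas.union hEmeas
    have hBvol : (volume B).toReal = (volume A).toReal + δ := by
      rw [hB, measure_union hEdisjA hEmeas, ENNReal.toReal_add hfinA hEfin, hEtoReal]
    have hBlen : (volume B).toReal ≤ α := by
      rw [hBvol]
      have := min_le_left (α - (volume A).toReal) (w i - u i)
      rw [← hδ] at this
      linarith
    have hv : ∀ j, u j ≤ (volume (B ∩ W j)).toReal := by
      intro j
      exact ENNReal.toReal_mono (subfin (Set.inter_subset_left.trans hBsub))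
        (measure_mono (Set.inter_subset_inter_left _ Set.subset_union_left))
    have hvi : u i + δ ≤ (volume (B ∩ W i)).toReal := by
      have hsub2 : (A ∩ W i) ∪ E ⊆ B ∩ W i := by
        apply Set.union_subset
        · exact Set.inter_subset_inter_left _ Set.subset_union_left
        · intro x hx; exact ⟨Or.inr hx, (hEsub hx).1⟩
      have hd : Disjoint (A ∩ W i) E := hEdisjA.mono_left Set.inter_subset_left
      have h1 : volume ((A ∩ W i) ∪ E) = volume (A ∩ W i) + volume E :=
        measure_union hd hEmeas
      have h2 := ENNReal.toReal_mono (subfin (Set.inter_subset_left.trans hBsub))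
        (measure_mono hsub2)
      rw [h1, ENNReal.toReal_add (hfinAW i) hEfin, hEtoReal] at h2
      exact h2
    refine not_leximinLE_of_cap (s := u i + δ) (fun j => min_le_min (hv j) le_rfl)
      (i := i) ?_ (hlex B hBsub hBmeas hBlen)
    have h1 : min (u i) (u i + δ) = u i := min_eq_left (by linarith)
    have h2 : min ((volume (B ∩ W i)).toReal) (u i + δ) = u i + δ := min_eq_right hvi
    rw [h1, h2]
    linarith
  -- Fact B
  have hIccW : ∀ i, (volume (Set.Icc (0:ℝ) 1 \ W i)).toReal = 1 - w i := by
    intro i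
    have hkey : volume (Set.Icc (0:ℝ) 1 ∩ W i) + volume (Set.Icc (0:ℝ) 1 \ W i)
        = volume (Set.Icc (0:ℝ) 1) := measure_inter_add_diff _ (hWmeas i)
    rw [Set.inter_eq_self_of_subset_right (hWsub i)] at hkey
    have h1 := congrArg ENNReal.toReal hkey
    rw [ENNReal.toReal_add (hfinW i) (subfin Set.diff_subset), Real.volume_Icc] at h1
    simp only [sub_zero, ENNReal.ofReal_one, ENNReal.toReal_one] at h1
    have h2 : (volume (W i)).toReal = w i := rfl
    rw [h2] at h1
    linarith
  have factB : ∀ i, w i - (1 - α) ≤ u i := by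
    intro i
    by_contra hcon
    push_neg at hcon
    have hsub : A ⊆ (A ∩ W i) ∪ (Set.Icc 0 1 \ W i) := by
      intro x hx
      by_cases hxW : x ∈ W i
      · exact Or.inl ⟨hx, hxW⟩
      · exact Or.inr ⟨hAsub hx, hxW⟩
    have h1 : volume A ≤ volume (A ∩ W i) + volume (Set.Icc (0:ℝ) 1 \ W i) :=
      le_trans (measure_mono hsub) (measure_union_le _ _)
    have h2 := ENNReal.toReal_mono
      (ENNReal.add_ne_top.2 ⟨hfinAW i, subfin Set.diff_subset⟩) h1
    rw [ENNReal.toReal_add (hfinAW i) (subfin Set.diff_subset), hIccW i] at h2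
    exact no_slack i (by linarith) (by linarith)
  -- Fact A
  have factA : ∀ i, min (α / n) (w i) ≤ u i := by
    intro i
    by_contra hcon
    push_neg at hcon
    have hiα : u i < α / n := lt_of_lt_of_le hcon (min_le_left _ _)
    have hiw : u i < w i := lt_of_lt_of_le hcon (min_le_right _ _)
    set S : Finset (Fin n) := Finset.univ.filter (fun j => u j ≤ u i) with hS
    have hiS : i ∈ S := by simp [hS]
    set U : Set ℝ := ⋃ j ∈ S, W j with hUdef
    have hUmeas : MeasurableSet U := S.measurableSet_biUnion (fun j _ => hWmeas j)
    by_cases hAU : volume (A \ U) = 0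
    · have h1 : volume A ≤ ∑ j ∈ S, volume (A ∩ W j) := by
        calc volume A = volume (A ∩ U) + volume (A \ U) :=
              (measure_inter_add_diff A hUmeas).symm
          _ = volume (A ∩ U) := by rw [hAU, add_zero]
          _ = volume (⋃ j ∈ S, A ∩ W j) := by rw [hUdef, Set.inter_iUnion₂]
          _ ≤ ∑ j ∈ S, volume (A ∩ W j) := measure_biUnion_finset_le S _
      have h2 : (volume A).toReal ≤ ∑ j ∈ S, u j := by
        have h3 := ENNReal.toReal_mono (ENNReal.sum_ne_top.2 (fun j _ => hfinAW j)) h1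
        rwa [ENNReal.toReal_sum (fun j _ => hfinAW j)] at h3
      have h4 : ∑ j ∈ S, u j ≤ (S.card : ℝ) * u i := by
        have := Finset.sum_le_card_nsmul S u (u i)
          (fun j hj => by rw [hS] at hj; exact (Finset.mem_filter.1 hj).2)
        simpa [nsmul_eq_mul] using this
      have h5 : (S.card : ℝ) ≤ (n : ℝ) := by
        have h5a := Finset.card_le_univ S
        rw [Fintype.card_fin] at h5a
        exact_mod_cast h5a
      have hn0 : (0:ℝ) < n := by linarith
      have hA_lt : (volume A).toReal < α := by
        have hci : (S.card:ℝ) * u i ≤ (n:ℝ) * u i :=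
          mul_le_mul_of_nonneg_right h5 (hu0 i)
        have h6 : (n:ℝ) * u i < (n:ℝ) * (α / n) :=
          mul_lt_mul_of_pos_left hiα hn0
        have h7 : (n:ℝ) * (α / n) = α := by field_simp
        rw [h7] at h6
        linarith
      exact no_slack i hA_lt hiw
    · have hAUfin : volume (A \ U) ≠ ⊤ := subfin (Set.diff_subset.trans hAsub)
      have hAUpos : 0 < (volume (A \ U)).toReal :=
        ENNReal.toReal_pos hAU hAUfin
      set φ : Fin n → ℝ := fun j => if u j ≤ u i then 1 else (u j - u i) / 2 with hφ
      have hφpos : ∀ j, 0 < φ j := by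
        intro j
        rw [hφ]
        by_cases hj : u j ≤ u i
        · simp [hj]
        · simp only [hj, if_false]
          push_neg at hj
          linarith
      have hne : (Finset.univ : Finset (Fin n)).Nonempty := ⟨i, Finset.mem_univ i⟩
      set ε := Finset.univ.inf' hne φ with hε
      have hεpos : 0 < ε := by
        rw [hε, Finset.lt_inf'_iff]
        exact fun j _ => hφpos j
      set δ := min (min ((volume (A \ U)).toReal) (w i - u i)) ε with hδ
      have hδpos : 0 < δ := lt_min (lt_min hAUpos (by linarith)) hεpos
      have hδ1 : δ ≤ (volume (A \ U)).toReal := le_trans (min_le_left _ _) (min_le_left _ _)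
      have hδ2 : δ ≤ w i - u i := le_trans (min_le_left _ _) (min_le_right _ _)
      have hδ3 : ∀ j, ¬ (u j ≤ u i) → u i + δ ≤ u j - δ := by
        intro j hj
        have h1 : δ ≤ φ j := le_trans (min_le_right _ _) (Finset.inf'_le φ (Finset.mem_univ j))
        rw [hφ] at h1
        simp only [hj, if_false] at h1
        push_neg at hj
        linarith
      obtain ⟨D, hDsub, hDmeas, hDvol⟩ :=
        exists_subset_toReal (Set.diff_subset.trans hAsub) (hAmeas.diff hUmeas) hδpos.le hδ1
      obtain ⟨E, hEsub, hEmeas, hEvol⟩ :=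
        exists_subset_toReal (Set.diff_subset.trans (hWsub i)) ((hWmeas i).diff hAmeas)
          hδpos.le (by rw [hWdiffA i]; exact hδ2)
      have hDfin : volume D ≠ ⊤ := by rw [hDvol]; exact ENNReal.ofReal_ne_top
      have hEfin : volume E ≠ ⊤ := by rw [hEvol]; exact ENNReal.ofReal_ne_top
      have hDtoReal : (volume D).toReal = δ := by rw [hDvol, ENNReal.toReal_ofReal hδpos.le]
      have hEtoReal : (volume E).toReal = δ := by rw [hEvol, ENNReal.toReal_ofReal hδpos.le]
      set B := (A \ D) ∪ E with hB
      have hBsub : B ⊆ Set.Icc 0 1 :=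
        Set.union_subset (Set.diff_subset.trans hAsub)
          (hEsub.trans (Set.diff_subset.trans (hWsub i)))
      have hBmeas : MeasurableSet B := (hAmeas.diff hDmeas).union hEmeas
      have hADvol : (volume (A \ D)).toReal = (volume A).toReal - δ := by
        have hkey : volume (A ∩ D) + volume (A \ D) = volume A :=
          measure_inter_add_diff A hDmeas
        have hAD : A ∩ D = D :=
          Set.inter_eq_self_of_subset_right (hDsub.trans Set.diff_subset)
        rw [hAD] at hkey
        have h1 := congrArg ENNReal.toReal hkey
        rw [ENNReal.toReal_add hDfin (subfin (Set.diff_subset.trans hAsub)), hDtoReal] at h1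
        linarith
      have hBlen : (volume B).toReal ≤ α := by
        have h1 : volume B ≤ volume (A \ D) + volume E := measure_union_le _ _
        have h2 := ENNReal.toReal_mono
          (ENNReal.add_ne_top.2 ⟨subfin (Set.diff_subset.trans hAsub), hEfin⟩) h1
        rw [ENNReal.toReal_add (subfin (Set.diff_subset.trans hAsub)) hEfin,
          hADvol, hEtoReal] at h2
        linarith
      have hvS : ∀ j, u j ≤ u i → u j ≤ (volume (B ∩ W j)).toReal := by
        intro j hj
        apply ENNReal.toReal_mono (subfin (Set.inter_subset_left.trans hBsub))
        apply measure_mono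
        intro x hx
        refine ⟨Or.inl ⟨hx.1, fun hxD => ?_⟩, hx.2⟩
        have hjS : j ∈ S := by simp [hS, hj]
        have hxU : x ∈ U := by
          rw [hUdef]
          exact Set.mem_iUnion₂.2 ⟨j, hjS, hx.2⟩
        exact (hDsub hxD).2 hxU
      have hvi : u i + δ ≤ (volume (B ∩ W i)).toReal := by
        have hsub2 : (A ∩ W i) ∪ E ⊆ B ∩ W i := by
          apply Set.union_subset
          · intro x hx
            refine ⟨Or.inl ⟨hx.1, fun hxD => ?_⟩, hx.2⟩
            have hxU : x ∈ U := by
              rw [hUdef]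
              exact Set.mem_iUnion₂.2 ⟨i, hiS, hx.2⟩
            exact (hDsub hxD).2 hxU
          · intro x hx; exact ⟨Or.inr hx, (hEsub hx).1⟩
        have hd : Disjoint (A ∩ W i) E :=
          Set.disjoint_right.2 (fun x hx hx2 => (hEsub hx).2 hx2.1)
        have h1 : volume ((A ∩ W i) ∪ E) = volume (A ∩ W i) + volume E :=
          measure_union hd hEmeas
        have h2 := ENNReal.toReal_mono (subfin (Set.inter_subset_left.trans hBsub))
          (measure_mono hsub2)
        rw [h1, ENNReal.toReal_add (hfinAW i) hEfin, hEtoReal] at h2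
        exact h2
      have hvO : ∀ j, ¬(u j ≤ u i) → u j - δ ≤ (volume (B ∩ W j)).toReal := by
        intro j hj
        have hsub2 : (A ∩ W j) ⊆ (B ∩ W j) ∪ D := by
          intro x hx
          by_cases hxD : x ∈ D
          · exact Or.inr hxD
          · exact Or.inl ⟨Or.inl ⟨hx.1, hxD⟩, hx.2⟩
        have h1 : volume (A ∩ W j) ≤ volume (B ∩ W j) + volume D :=
          le_trans (measure_mono hsub2) (measure_union_le _ _)
        have h2 := ENNReal.toReal_mono
          (ENNReal.add_ne_top.2 ⟨subfin (Set.inter_subset_left.trans hBsub), hDfin⟩) h1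
        rw [ENNReal.toReal_add (subfin (Set.inter_subset_left.trans hBsub)) hDfin,
          hDtoReal] at h2
        linarith
      refine not_leximinLE_of_cap (s := u i + δ) ?_ (i := i) ?_ (hlex B hBsub hBmeas hBlen)
      · intro j
        by_cases hj : u j ≤ u i
        · exact min_le_min (hvS j hj) le_rfl
        · have hge : u i + δ ≤ (volume (B ∩ W j)).toReal :=
            le_trans (hδ3 j hj) (hvO j hj)
          calc min (u j) (u i + δ) ≤ u i + δ := min_le_right _ _
            _ = min ((volume (B ∩ W j)).toReal) (u i + δ) := (min_eq_right hge).symm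
      · have h1 : min (u i) (u i + δ) = u i := min_eq_left (by linarith)
        have h2 : min ((volume (B ∩ W i)).toReal) (u i + δ) = u i + δ := min_eq_right hvi
        rw [h1, h2]
        linarith
  -- final arithmetic
  intro i
  have hwpos : 0 < w i := hWpos i
  have hden : 0 < (n:ℝ) - ((n:ℝ) - 1) * α := by nlinarith
  have hgoal : α * w i ≤ u i * ((n:ℝ) - ((n:ℝ) - 1) * α) := by
    have hA := factA i
    have hB := factB i
    rcases le_total (α / n) (w i) with hmin | hmin
    · rw [min_eq_left hmin] at hA
      have hn0 : (0:ℝ) < n := by linarith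
      have e0 : (0:ℝ) ≤ (n:ℝ) * (1 - α) := by nlinarith
      have e1 := mul_le_mul_of_nonneg_left hA e0
      have e1' : (n:ℝ) * (1 - α) * (α / n) = α * (1 - α) := by
        field_simp
      rw [e1'] at e1
      have e2 : α * (w i - (1 - α)) ≤ α * u i := mul_le_mul_of_nonneg_left hB hα0.le
      nlinarith
    · rw [min_eq_right hmin] at hA
      have e1 : α * w i ≤ α * u i := mul_le_mul_of_nonneg_left hA hα0.le
      have e2 : 0 ≤ u i * ((n:ℝ) * (1 - α)) := by
        apply mul_nonneg (hu0 i)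
        nlinarith
      nlinarith
  rw [div_le_div_iff₀ hden hwpos]
  exact hgoal
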